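/- For integer d ≥ 3, let I_{1/2}(a,b) denote the probability that a Beta(a,b) random variable lies in [0, 1/2). Then C_d = 1 - d·(1 - I_{1/2}(1/(d-2), 1 + 1/(d-2))) satisfies C_d ∈ (0, 1) for d sufficiently large, and lim_{d→∞} C_d exists and is positive. -/

import Mathlib

open Real Filter

/-- The regularized incomplete beta function `I_{1/2}(a,b)`: the probability that a
`Beta(a,b)` random variable lies in `[0, 1/2)`. -/
noncomputable def regIncompleteBetaHalf (a b : ℝ) : ℝ :=
  (∫ x in (0 : ℝ)..(1 / 2), x ^ (a - 1) * (1 - x) ^ (b - 1)) /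
    ∫ x in (0 : ℝ)..1, x ^ (a - 1) * (1 - x) ^ (b - 1)

/-- The limiting lower bound `C_d` on the reporting-centrality detection probability. -/
noncomputable def reportingCenterConst (d : ℕ) : ℝ :=
  1 - d * (1 - regIncompleteBetaHalf (1 / ((d : ℝ) - 2)) (1 + 1 / ((d : ℝ) - 2)))

section Aux
open MeasureTheory Set intervalIntegral

open Real Filter MeasureTheory Set intervalIntegral

noncomputable def Fb (e x : ℝ) : ℝ := x ^ (e - 1) * (1 - x) ^ e

lemma Fb_meas (e : ℝ) : Measurable (Fb e) := by
  unfold Fb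
  fun_prop

lemma Fb_nonneg {e x : ℝ} (h0 : 0 ≤ x) (h1 : x ≤ 1) : 0 ≤ Fb e x :=
  mul_nonneg (rpow_nonneg h0 _) (rpow_nonneg (by linarith) _)

lemma Fb_int_left {e : ℝ} (he : 0 < e) :
    IntervalIntegrable (Fb e) volume 0 (1/2) := by
  rw [intervalIntegrable_iff_integrableOn_Ioc_of_le (by norm_num)]
  have hg : IntegrableOn (fun x : ℝ => x ^ (e - 1)) (Ioc 0 (1/2)) volume := by
    have := (intervalIntegral.intervalIntegrable_rpow' (a := 0) (b := 1/2)
      (r := e - 1) (by linarith))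
    rwa [intervalIntegrable_iff_integrableOn_Ioc_of_le (by norm_num)] at this
  refine MeasureTheory.Integrable.mono hg ((Fb_meas e).aestronglyMeasurable.restrict) ?_
  rw [ae_restrict_iff' measurableSet_Ioc]
  filter_upwards with x hx
  rcases hx with ⟨hx0, hx1⟩
  rw [Real.norm_eq_abs, Real.norm_eq_abs, abs_of_nonneg (Fb_nonneg hx0.le (by linarith)),
    abs_of_nonneg (rpow_nonneg hx0.le _)]
  unfold Fb
  exact mul_le_of_le_one_right (rpow_nonneg hx0.le _)
    (rpow_le_one (by linarith) (by linarith) he.le)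

lemma Fb_int_right {e : ℝ} (he : 0 < e) :
    IntervalIntegrable (Fb e) volume (1/2) 1 := by
  apply ContinuousOn.intervalIntegrable
  apply ContinuousOn.mul
  · intro x hx
    rw [uIcc_of_le (by norm_num)] at hx
    exact ((Real.continuousAt_rpow_const x (e-1) (Or.inl (by nlinarith [hx.1]))).continuousWithinAt)
  · intro x hx
    exact (((continuous_const.sub continuous_id).continuousAt).rpow_const
      (Or.inr he.le)).continuousWithinAt

lemma Fb_int_full {e : ℝ} (he : 0 < e) :
    IntervalIntegrable (Fb e) volume 0 1 :=
  (Fb_int_left he).trans (Fb_int_right he)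

lemma Fb_split {e : ℝ} (he : 0 < e) :
    (∫ x in (0:ℝ)..1, Fb e x) =
      (∫ x in (0:ℝ)..(1/2), Fb e x) + ∫ x in (1/2:ℝ)..1, Fb e x :=
  (integral_add_adjacent_intervals (Fb_int_left he) (Fb_int_right he)).symm

lemma Fb_le_two {e x : ℝ} (he : 0 < e) (he1 : e ≤ 1) (hx : x ∈ Icc (1/2:ℝ) 1) :
    Fb e x ≤ 2 := by
  obtain ⟨hx0, hx1⟩ := hx
  have hxpos : (0:ℝ) < x := by linarith
  have h1 : x ^ (e - 1) = x ^ e / x := by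
    rw [Real.rpow_sub hxpos, Real.rpow_one]
  have h2 : x ^ e ≤ 1 := rpow_le_one hxpos.le hx1 he.le
  have h3 : (1 - x) ^ e ≤ 1 := rpow_le_one (by linarith) (by linarith) he.le
  have h4 : x ^ e / x ≤ 2 := by
    rw [div_le_iff₀ hxpos]; nlinarith
  have h5 : (0:ℝ) ≤ x ^ (e-1) := rpow_nonneg hxpos.le _
  calc Fb e x ≤ x ^ (e-1) * 1 := by
        exact mul_le_mul_of_nonneg_left h3 h5
    _ = x ^ e / x := by rw [mul_one, h1]
    _ ≤ 2 := h4

lemma J_pos {e : ℝ} (he : 0 < e) :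
    0 < ∫ x in (1/2:ℝ)..1, Fb e x := by
  apply intervalIntegral.intervalIntegral_pos_of_pos_on (Fb_int_right he)
  · intro x hx
    exact mul_pos (Real.rpow_pos_of_pos (by linarith [hx.1]) _)
      (Real.rpow_pos_of_pos (by linarith [hx.2]) _)
  · norm_num

lemma J_le_one {e : ℝ} (he : 0 < e) (he1 : e ≤ 1) :
    (∫ x in (1/2:ℝ)..1, Fb e x) ≤ 1 := by
  have : (∫ x in (1/2:ℝ)..1, Fb e x) ≤ ∫ _x in (1/2:ℝ)..1, (2:ℝ) := by
    apply intervalIntegral.integral_mono_on (by norm_num) (Fb_int_right he)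
      (intervalIntegrable_const)
    intro x hx
    exact Fb_le_two he he1 hx
  rw [intervalIntegral.integral_const, smul_eq_mul] at this
  linarith

lemma I0_nonneg {e : ℝ} : 0 ≤ ∫ x in (0:ℝ)..(1/2), Fb e x := by
  apply intervalIntegral.integral_nonneg (by norm_num)
  intro x hx
  exact Fb_nonneg hx.1 (by linarith [hx.2])

lemma B_pos {e : ℝ} (he : 0 < e) : 0 < ∫ x in (0:ℝ)..1, Fb e x := by
  rw [Fb_split he]
  linarith [J_pos he, I0_nonneg (e := e)]

lemma int_rpow_half {r : ℝ} (hr : -1 < r) :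
    (∫ x in (0:ℝ)..(1/2), x ^ r) = (1/2:ℝ) ^ (r+1) / (r+1) := by
  rw [integral_rpow (Or.inl hr), Real.zero_rpow (by linarith), sub_zero]

lemma I0_le {e : ℝ} (he : 0 < e) :
    (∫ x in (0:ℝ)..(1/2), Fb e x) ≤ (1/2:ℝ) ^ e / e := by
  have h : (∫ x in (0:ℝ)..(1/2), Fb e x) ≤ ∫ x in (0:ℝ)..(1/2), x ^ (e-1) := by
    apply intervalIntegral.integral_mono_on (by norm_num) (Fb_int_left he)
      (intervalIntegral.intervalIntegrable_rpow' (by linarith))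
    intro x hx
    exact mul_le_of_le_one_right (rpow_nonneg hx.1 _)
      (rpow_le_one (by linarith [hx.2]) (by linarith [hx.1]) he.le)
  calc (∫ x in (0:ℝ)..(1/2), Fb e x) ≤ ∫ x in (0:ℝ)..(1/2), x ^ (e-1) := h
    _ = (1/2:ℝ) ^ e / e := by rw [int_rpow_half (by linarith)]; norm_num

lemma pointwise_low {e x : ℝ} (he : 0 < e) (hx : x ∈ Ioc (0:ℝ) (1/2)) :
    x ^ (e-1) - 2*e*x^e ≤ Fb e x := by
  obtain ⟨hx0, hx2⟩ := hx
  have hx1 : (0:ℝ) < 1 - x := by linarith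
  have hxe : x ^ e = x ^ (e-1) * x := by
    nth_rewrite 1 [show e = (e-1)+1 by ring]
    rw [Real.rpow_add hx0, Real.rpow_one]
  have hlog : -Real.log (1-x) ≤ 2*x := by
    have h6 := Real.log_le_sub_one_of_pos (inv_pos.mpr hx1)
    rw [Real.log_inv] at h6
    have h7 : (1-x)⁻¹ ≤ 1 + 2*x := by
      rw [← one_div, div_le_iff₀ hx1]; nlinarith
    linarith
  have hkey : 1 - 2*e*x ≤ (1-x) ^ e := by
    rw [Real.rpow_def_of_pos hx1]
    have h8 : e * Real.log (1-x) ≥ e * (-(2*x)) := by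
      apply mul_le_mul_of_nonneg_left (by linarith) he.le
    have h9 := Real.add_one_le_exp (Real.log (1-x) * e)
    nlinarith
  have hpos : (0:ℝ) ≤ x ^ (e-1) := rpow_nonneg hx0.le _
  unfold Fb
  calc x ^ (e-1) - 2*e*x^e = x ^ (e-1) * (1 - 2*e*x) := by rw [hxe]; ring
    _ ≤ x ^ (e-1) * (1-x)^e := mul_le_mul_of_nonneg_left hkey hpos

lemma I0_ge {e : ℝ} (he : 0 < e) :
    (1/2:ℝ) ^ e / e - e ≤ ∫ x in (0:ℝ)..(1/2), Fb e x := by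
  have hint1 : IntervalIntegrable (fun x : ℝ => x ^ (e-1) - 2*e*x^e) volume 0 (1/2) :=
    (intervalIntegral.intervalIntegrable_rpow' (by linarith)).sub
      ((intervalIntegral.intervalIntegrable_rpow' (r := e) (by linarith)).const_mul _)
  have hmono : (∫ x in (0:ℝ)..(1/2), (x ^ (e-1) - 2*e*x^e)) ≤
      ∫ x in (0:ℝ)..(1/2), Fb e x := by
    rw [intervalIntegral.integral_of_le (by norm_num : (0:ℝ) ≤ 1/2),
        intervalIntegral.integral_of_le (by norm_num : (0:ℝ) ≤ 1/2)]
    apply MeasureTheory.setIntegral_mono_on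
    · rw [← intervalIntegrable_iff_integrableOn_Ioc_of_le (by norm_num)]; exact hint1
    · rw [← intervalIntegrable_iff_integrableOn_Ioc_of_le (by norm_num)]; exact Fb_int_left he
    · exact measurableSet_Ioc
    · exact fun x hx => pointwise_low he hx
  have hcalc : (∫ x in (0:ℝ)..(1/2), (x ^ (e-1) - 2*e*x^e)) =
      (1/2:ℝ)^e/e - 2*e*((1/2:ℝ)^(e+1)/(e+1)) := by
    rw [intervalIntegral.integral_sub (intervalIntegral.intervalIntegrable_rpow' (by linarith))
        ((intervalIntegral.intervalIntegrable_rpow' (r := e) (by linarith)).const_mul _),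
      intervalIntegral.integral_const_mul, int_rpow_half (by linarith : (-1:ℝ) < e - 1),
      int_rpow_half (by linarith : (-1:ℝ) < e)]
    norm_num
  have hsmall : 2*e*((1/2:ℝ)^(e+1)/(e+1)) ≤ e := by
    have h1 : (1/2:ℝ)^(e+1) ≤ (1/2:ℝ)^(1:ℝ) :=
      Real.rpow_le_rpow_of_exponent_ge (by norm_num) (by norm_num) (by linarith)
    rw [Real.rpow_one] at h1
    have h2 : (1/2:ℝ)^(e+1)/(e+1) ≤ 1/2 := by
      apply div_le_of_le_mul₀ (by linarith) (by norm_num)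
      nlinarith [Real.rpow_nonneg (by norm_num : (0:ℝ) ≤ 1/2) (e+1)]
    nlinarith
  linarith

noncomputable def eps (d : ℕ) : ℝ := 1 / ((d:ℝ) - 2)

lemma eps_pos {d : ℕ} (hd : 3 ≤ d) : 0 < eps d := by
  have : (3:ℝ) ≤ (d:ℝ) := by exact_mod_cast hd
  unfold eps
  exact div_pos one_pos (by linarith)

lemma eps_le_one {d : ℕ} (hd : 3 ≤ d) : eps d ≤ 1 := by
  have : (3:ℝ) ≤ (d:ℝ) := by exact_mod_cast hd
  unfold eps
  rw [div_le_one (by linarith)]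
  linarith

lemma eps_tendsto : Tendsto eps atTop (nhds 0) := by
  unfold eps
  simp only [one_div]
  apply Tendsto.inv_tendsto_atTop
  apply tendsto_atTop_add_const_right
  exact tendsto_natCast_atTop_atTop

lemma J_tendsto :
    Tendsto (fun d : ℕ => ∫ x in (1/2:ℝ)..1, Fb (eps d) x) atTop (nhds (Real.log 2)) := by
  have hlog : Real.log 2 = ∫ x in (1/2:ℝ)..1, x⁻¹ := by
    rw [integral_inv (by norm_num [Set.uIcc_of_le])]
    norm_num
  rw [hlog]
  apply intervalIntegral.tendsto_integral_filter_of_dominated_convergence (fun _ => (2:ℝ))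
  · filter_upwards with d
    exact (Fb_meas (eps d)).aestronglyMeasurable.restrict
  · filter_upwards [eventually_ge_atTop 3] with d hd
    filter_upwards with x hx
    rw [Set.uIoc_of_le (by norm_num)] at hx
    rw [Real.norm_eq_abs, abs_of_nonneg (Fb_nonneg (by linarith [hx.1]) hx.2)]
    exact Fb_le_two (eps_pos hd) (eps_le_one hd) ⟨hx.1.le, hx.2⟩
  · exact intervalIntegrable_const
  · have hne : ∀ᵐ x : ℝ, x ≠ (1:ℝ) := by
      rw [MeasureTheory.ae_iff]
      simpa using measure_singleton (1:ℝ)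
    filter_upwards [hne] with x hx1 hx
    rw [Set.uIoc_of_le (by norm_num)] at hx
    obtain ⟨h1, h2⟩ := hx
    have hx0 : (0:ℝ) < x := by linarith
    have hxlt : x < 1 := lt_of_le_of_ne h2 hx1
    have hb : Tendsto (fun d : ℕ => x ^ (eps d - 1)) atTop (nhds (x ^ (0-1:ℝ))) :=
      Filter.Tendsto.rpow tendsto_const_nhds (eps_tendsto.sub_const 1) (Or.inl hx0.ne')
    have hc : Tendsto (fun d : ℕ => (1-x) ^ (eps d)) atTop (nhds ((1-x) ^ (0:ℝ))) :=
      Filter.Tendsto.rpow tendsto_const_nhds eps_tendsto (Or.inl (by linarith))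
    have := hb.mul hc
    simp only [Real.rpow_zero, mul_one, zero_sub, Real.rpow_neg_one] at this
    exact this

lemma half_rpow_tendsto :
    Tendsto (fun d : ℕ => (1/2:ℝ) ^ (eps d)) atTop (nhds 1) := by
  have := Filter.Tendsto.rpow (tendsto_const_nhds (x := (1/2:ℝ))) eps_tendsto
    (Or.inl (by norm_num))
  simpa using this

lemma eB_tendsto :
    Tendsto (fun d : ℕ => eps d * ∫ x in (0:ℝ)..1, Fb (eps d) x) atTop (nhds 1) := by
  have hlow : Tendsto (fun d : ℕ => (1/2:ℝ) ^ (eps d) - (eps d)^2) atTop (nhds 1) := by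
    have := half_rpow_tendsto.sub ((eps_tendsto.pow 2))
    simpa using this
  have hup : Tendsto (fun d : ℕ => (1/2:ℝ) ^ (eps d) + eps d) atTop (nhds 1) := by
    have := half_rpow_tendsto.add eps_tendsto
    simpa using this
  apply tendsto_of_tendsto_of_tendsto_of_le_of_le' hlow hup
  · filter_upwards [eventually_ge_atTop 3] with d hd
    have he := eps_pos hd
    have h1 := I0_ge he
    have h2 : eps d * ((1/2:ℝ)^(eps d)/(eps d) - eps d) ≤
        eps d * ∫ x in (0:ℝ)..(1/2), Fb (eps d) x :=
      mul_le_mul_of_nonneg_left h1 he.le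
    rw [Fb_split he, mul_add]
    have h3 : eps d * ((1/2:ℝ)^(eps d)/(eps d) - eps d) =
        (1/2:ℝ)^(eps d) - (eps d)^2 := by
      field_simp
    nlinarith [J_pos (e := eps d) he, he.le]
  · filter_upwards [eventually_ge_atTop 3] with d hd
    have he := eps_pos hd
    have h1 := I0_le he
    have h2 : eps d * ∫ x in (0:ℝ)..(1/2), Fb (eps d) x ≤
        eps d * ((1/2:ℝ)^(eps d)/(eps d)) := mul_le_mul_of_nonneg_left h1 he.le
    have h3 : eps d * ((1/2:ℝ)^(eps d)/(eps d)) = (1/2:ℝ)^(eps d) := by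
      field_simp
    have h4 := J_le_one he (eps_le_one hd)
    rw [Fb_split he, mul_add]
    nlinarith [he.le]

lemma deps_tendsto :
    Tendsto (fun d : ℕ => (d:ℝ) * eps d) atTop (nhds 1) := by
  have h : ∀ᶠ d : ℕ in atTop, (d:ℝ) * eps d = 1 + 2 * eps d := by
    filter_upwards [eventually_ge_atTop 3] with d hd
    have h3 : (3:ℝ) ≤ (d:ℝ) := by exact_mod_cast hd
    unfold eps
    have hne : (d:ℝ) - 2 ≠ 0 := by linarith
    field_simp
    ring
  have h2 : Tendsto (fun d : ℕ => 1 + 2 * eps d) atTop (nhds 1) := by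
    have := (eps_tendsto.const_mul 2).const_add 1
    simpa using this
  exact Tendsto.congr' (h.mono fun d hd => hd.symm) h2

lemma hInt (d : ℕ) : regIncompleteBetaHalf (1/((d:ℝ)-2)) (1 + 1/((d:ℝ)-2)) =
    (∫ x in (0:ℝ)..(1/2), Fb (eps d) x) / (∫ x in (0:ℝ)..1, Fb (eps d) x) := by
  unfold regIncompleteBetaHalf Fb eps
  simp only [add_sub_cancel_left]

lemma hC : ∀ᶠ d : ℕ in atTop, reportingCenterConst d =
    1 - ((d:ℝ) * eps d) *
      ((∫ x in (1/2:ℝ)..1, Fb (eps d) x) / (eps d * ∫ x in (0:ℝ)..1, Fb (eps d) x)) := by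
  filter_upwards [eventually_ge_atTop 3] with d hd
  have he := eps_pos hd
  have hB := B_pos (e := eps d) he
  unfold reportingCenterConst
  rw [hInt d]
  set I0 := ∫ x in (0:ℝ)..(1/2), Fb (eps d) x with hI0
  set J := ∫ x in (1/2:ℝ)..1, Fb (eps d) x with hJ
  have hBs : (∫ x in (0:ℝ)..1, Fb (eps d) x) = I0 + J := Fb_split he
  rw [hBs]
  rw [hBs] at hB
  have hene : eps d ≠ 0 := he.ne'
  have hBne : I0 + J ≠ 0 := hB.ne'
  field_simp
  ring

end Aux

/-- `C_d ∈ (0,1)` for all sufficiently large `d`, and `C_d` converges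
to a positive limit as `d → ∞`. -/
theorem reporting_center_const_positive :
    (∀ᶠ d : ℕ in atTop, reportingCenterConst d ∈ Set.Ioo (0 : ℝ) 1) ∧
    ∃ L : ℝ, 0 < L ∧ Tendsto reportingCenterConst atTop (nhds L) := by
  have hT : Tendsto (fun d : ℕ => 1 - ((d:ℝ) * eps d) *
      ((∫ x in (1/2:ℝ)..1, Fb (eps d) x) / (eps d * ∫ x in (0:ℝ)..1, Fb (eps d) x)))
      atTop (nhds (1 - 1 * (Real.log 2 / 1))) :=
    tendsto_const_nhds.sub (deps_tendsto.mul (J_tendsto.div eB_tendsto one_ne_zero))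
  have hT' : Tendsto reportingCenterConst atTop (nhds (1 - Real.log 2)) := by
    have : (1:ℝ) - 1 * (Real.log 2 / 1) = 1 - Real.log 2 := by ring
    rw [this] at hT
    exact Tendsto.congr' (hC.mono fun d hd => hd.symm) hT
  have hL0 : 0 < 1 - Real.log 2 := by
    have := Real.log_two_lt_d9
    linarith
  have hL1 : 1 - Real.log 2 < 1 := by
    have := Real.log_pos (by norm_num : (1:ℝ) < 2)
    linarith
  exact ⟨hT' (Ioo_mem_nhds hL0 hL1), ⟨1 - Real.log 2, hL0, hT'⟩⟩
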